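/- Let E be an m×n real random matrix that is (C₁, c₁, γ)-concentrated for constants C₁, c₁, γ > 0, and let A be a deterministic m×n real matrix of rank r with singular values σ₁ ≥ ⋯ ≥ σ_r > 0. Let 1 ≤ j ≤ r be an integer and let σ_j' denote the j-th largest singular value of A+E. Then, for any t > 0, with probability at least 1 − 2·C₁·9^j·exp(−c₁ tᵞ/4ᵞ), one has σ_j' ≥ σ_j − t. -/

import Mathlib

open MeasureTheory ProbabilityTheory Matrix

theorem Matrix.isHermitian_transpose_mul_self {m n : Type*} [Fintype m] (A : Matrix m n ℝ) :
    (Aᵀ * A).IsHermitian := by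
  simpa using Matrix.isHermitian_conjTranspose_mul_self A

noncomputable def sval {m n : ℕ} (A : Matrix (Fin m) (Fin n) ℝ) (k : ℕ) : ℝ :=
  if h : k - 1 < n then
    Real.sqrt (((Matrix.isHermitian_transpose_mul_self A).eigenvalues ∘
      Tuple.sort (Matrix.isHermitian_transpose_mul_self A).eigenvalues)
      (Fin.rev ⟨k - 1, h⟩))
  else 0

noncomputable def spNorm {m n : Type*} [Fintype m] [Fintype n] [DecidableEq n]
    (A : Matrix m n ℝ) : ℝ :=
  ‖LinearMap.toContinuousLinearMap (Matrix.toEuclideanLin A)‖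

noncomputable def sinAngle {d : ℕ} (u v : Fin d → ℝ) : ℝ :=
  Real.sqrt (1 - (u ⬝ᵥ v) ^ 2 / ((u ⬝ᵥ u) * (v ⬝ᵥ v)))

def Concentrated {Ω : Type*} [MeasurableSpace Ω] (μ : Measure Ω) {m n : ℕ}
    (E : Ω → Matrix (Fin m) (Fin n) ℝ) (C₁ c₁ γ : ℝ) : Prop :=
  ∀ (u : Fin m → ℝ) (v : Fin n → ℝ), u ⬝ᵥ u = 1 → v ⬝ᵥ v = 1 →
    ∀ t : ℝ, 0 < t →
      μ {ω | t < |u ⬝ᵥ ((E ω) *ᵥ v)|} ≤ ENNReal.ofReal (C₁ * Real.exp (-c₁ * t ^ γ))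

noncomputable def symMat {m n : ℕ} (E : Matrix (Fin m) (Fin n) ℝ) :
    Matrix (Fin (m + n)) (Fin (m + n)) ℝ :=
  (Matrix.reindex finSumFinEquiv finSumFinEquiv) (Matrix.fromBlocks 0 E Eᵀ 0)

noncomputable def eigVal {d : ℕ} (M : Matrix (Fin d) (Fin d) ℝ) (k : ℕ) : ℝ := by
  classical
  exact if hM : M.IsHermitian then
    (if h : k - 1 < d then
      ((hM.eigenvalues ∘ Tuple.sort hM.eigenvalues) (Fin.rev ⟨k - 1, h⟩))
    else 0)
  else 0

noncomputable def toE {n : ℕ} (v : Fin n → ℝ) : EuclideanSpace ℝ (Fin n) :=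
  (WithLp.equiv 2 (Fin n → ℝ)).symm v

noncomputable def projSub {n : ℕ} (K : Submodule ℝ (EuclideanSpace ℝ (Fin n))) :
    EuclideanSpace ℝ (Fin n) →L[ℝ] EuclideanSpace ℝ (Fin n) :=
  K.subtypeL.comp K.orthogonalProjectionOnto

noncomputable def projSpan {n : ℕ} (S : Set (Fin n → ℝ)) :
    EuclideanSpace ℝ (Fin n) →L[ℝ] EuclideanSpace ℝ (Fin n) :=
  projSub (Submodule.span ℝ (toE '' S))

noncomputable def sinAngleSub {n : ℕ} (S T : Set (Fin n → ℝ)) : ℝ :=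
  ‖projSpan S - projSpan T‖

def IsBernoulliMatrix {Ω : Type*} [MeasurableSpace Ω] (μ : Measure Ω) {n : ℕ}
    (E : Ω → Matrix (Fin n) (Fin n) ℝ) : Prop :=
  (∀ i j, Measurable fun ω => E ω i j) ∧
  iIndepFun (m := fun _ : Fin n × Fin n => (inferInstance : MeasurableSpace ℝ))
    (fun p ω => E ω p.1 p.2) μ ∧
  (∀ i j, μ {ω | E ω i j = 1} = ENNReal.ofReal (1/2) ∧
          μ {ω | E ω i j = -1} = ENNReal.ofReal (1/2))


open Matrix MeasureTheory Metric Finset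
open scoped ENNReal

section B
variable {m n : ℕ}

lemma inner_eq_dot {k : ℕ} (x y : EuclideanSpace ℝ (Fin k)) : (inner ℝ x y : ℝ) = x ⬝ᵥ y := by
  simp [PiLp.inner_apply, dotProduct, mul_comm]

lemma dot_AtA (A : Matrix (Fin m) (Fin n) ℝ) (x y : Fin n → ℝ) :
    x ⬝ᵥ ((Aᵀ * A) *ᵥ y) = (A *ᵥ x) ⬝ᵥ (A *ᵥ y) := by
  rw [← Matrix.mulVec_mulVec, Matrix.dotProduct_mulVec x Aᵀ, Matrix.vecMul_transpose]

lemma sval_nonneg (A : Matrix (Fin m) (Fin n) ℝ) (k : ℕ) : 0 ≤ sval A k := by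
  unfold sval
  split
  · exact Real.sqrt_nonneg _
  · exact le_refl 0

-- bridge for eigenvector basis, plain-function form
lemma eigB_mulVec (A : Matrix (Fin m) (Fin n) ℝ) (i : Fin n) :
    (Aᵀ * A) *ᵥ ((Matrix.isHermitian_transpose_mul_self A).eigenvectorBasis i : Fin n → ℝ)
      = (Matrix.isHermitian_transpose_mul_self A).eigenvalues i •
        ((Matrix.isHermitian_transpose_mul_self A).eigenvectorBasis i : Fin n → ℝ) := by
  simpa [WithLp.equiv] using
    (Matrix.isHermitian_transpose_mul_self A).mulVec_eigenvectorBasis i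

lemma eigB_dot (A : Matrix (Fin m) (Fin n) ℝ) (i k : Fin n) :
    ((Matrix.isHermitian_transpose_mul_self A).eigenvectorBasis i : Fin n → ℝ) ⬝ᵥ
      ((Matrix.isHermitian_transpose_mul_self A).eigenvectorBasis k : Fin n → ℝ)
      = if i = k then 1 else 0 := by
  rw [← inner_eq_dot]
  have h := (Matrix.isHermitian_transpose_mul_self A).eigenvectorBasis.orthonormal
  rcases eq_or_ne i k with rfl | hik
  · rw [if_pos rfl, real_inner_self_eq_norm_mul_norm, h.1 i]; norm_num
  · simpa [hik] using h.2 hik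

lemma eig_nonneg (A : Matrix (Fin m) (Fin n) ℝ) (i : Fin n) :
    0 ≤ (Matrix.isHermitian_transpose_mul_self A).eigenvalues i := by
  have h1 : ((Matrix.isHermitian_transpose_mul_self A).eigenvectorBasis i : Fin n → ℝ) ⬝ᵥ
      ((Aᵀ * A) *ᵥ ((Matrix.isHermitian_transpose_mul_self A).eigenvectorBasis i : Fin n → ℝ))
      = (Matrix.isHermitian_transpose_mul_self A).eigenvalues i := by
    rw [eigB_mulVec, dotProduct_smul, eigB_dot]
    simp
  have h2 := dot_AtA A ((Matrix.isHermitian_transpose_mul_self A).eigenvectorBasis i : Fin n → ℝ)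
    ((Matrix.isHermitian_transpose_mul_self A).eigenvectorBasis i : Fin n → ℝ)
  rw [h2] at h1
  rw [← h1]
  exact Finset.sum_nonneg fun _ _ => mul_self_nonneg _

end B

section C
variable {m n : ℕ}

lemma exist_data (A : Matrix (Fin m) (Fin n) ℝ) (j : ℕ) (hj1 : 1 ≤ j) (hjn : j ≤ n)
    (hpos : 0 < sval A j) :
    ∃ (x : Fin j → EuclideanSpace ℝ (Fin n)) (y : Fin j → Fin m → ℝ) (σ : Fin j → ℝ),
      Orthonormal ℝ x ∧
      (∀ a b, (x a : Fin n → ℝ) ⬝ᵥ (x b : Fin n → ℝ) = if a = b then 1 else 0) ∧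
      (∀ a b, y a ⬝ᵥ y b = if a = b then 1 else 0) ∧
      (∀ a b, y a ⬝ᵥ (A *ᵥ (x b : Fin n → ℝ)) = if a = b then σ a else 0) ∧
      (∀ a, sval A j ≤ σ a) := by
  have hn : 1 ≤ n := le_trans hj1 hjn
  set hH := Matrix.isHermitian_transpose_mul_self A with hHdef
  set f := hH.eigenvalues with hfdef
  set g := Tuple.sort f with hgdef
  have hmono : Monotone (f ∘ g) := Tuple.monotone_sort f
  have hj1n : j - 1 < n := by omega
  have hsv : sval A j = Real.sqrt ((f ∘ g) (Fin.rev ⟨j - 1, hj1n⟩)) := by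
    rw [sval, dif_pos hj1n]
  have hrev : (Fin.rev ⟨j - 1, hj1n⟩ : Fin n) = ⟨n - j, by omega⟩ := by
    ext; simp [Fin.rev]; omega
  set ι : Fin j → Fin n := fun i => g ⟨n - j + i.1, by omega⟩ with hι
  have hinj : Function.Injective ι := by
    intro a b hab
    have h2 : (⟨n - j + a.1, by omega⟩ : Fin n) = ⟨n - j + b.1, by omega⟩ :=
      g.injective hab
    have h3 := Fin.mk.injEq .. ▸ h2
    have : n - j + a.1 = n - j + b.1 := by
      simpa using congrArg Fin.val h2
    exact Fin.ext (by omega)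
  set x : Fin j → EuclideanSpace ℝ (Fin n) := fun i => hH.eigenvectorBasis (ι i) with hx
  have hxon : Orthonormal ℝ x := hH.eigenvectorBasis.orthonormal.comp ι hinj
  have hxdot : ∀ a b, (x a : Fin n → ℝ) ⬝ᵥ (x b : Fin n → ℝ) = if a = b then 1 else 0 := by
    intro a b
    rw [hx]
    rw [eigB_dot A (ι a) (ι b)]
    by_cases hab : a = b
    · simp [hab]
    · rw [if_neg (fun h => hab (hinj h)), if_neg hab]
  have hfge : ∀ i : Fin j, (sval A j) ^ 2 ≤ f (ι i) := by
    intro i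
    have h0 : 0 ≤ (f ∘ g) (Fin.rev ⟨j - 1, hj1n⟩) := eig_nonneg A _
    have h1 : (sval A j) ^ 2 = (f ∘ g) (Fin.rev ⟨j - 1, hj1n⟩) := by
      rw [hsv, Real.sq_sqrt h0]
    rw [h1, hrev]
    have : ((⟨n - j, by omega⟩ : Fin n)) ≤ ⟨n - j + i.1, by omega⟩ := by
      simp [Fin.mk_le_mk]
    exact hmono this
  have hfpos : ∀ i : Fin j, 0 < f (ι i) := fun i =>
    lt_of_lt_of_le (by positivity) (hfge i)
  have hAx : ∀ a b, (A *ᵥ (x a : Fin n → ℝ)) ⬝ᵥ (A *ᵥ (x b : Fin n → ℝ)) =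
      if a = b then f (ι a) else 0 := by
    intro a b
    rw [← dot_AtA]
    rw [hx]
    rw [eigB_mulVec A (ι b), dotProduct_smul, eigB_dot A (ι a) (ι b)]
    by_cases hab : a = b
    · subst hab; simp; rfl
    · rw [if_neg (fun h => hab (hinj h)), if_neg hab]; simp
  refine ⟨x, fun a => (Real.sqrt (f (ι a)))⁻¹ • (A *ᵥ (x a : Fin n → ℝ)),
    fun a => Real.sqrt (f (ι a)), hxon, hxdot, ?_, ?_, ?_⟩
  · intro a b
    rw [smul_dotProduct, dotProduct_smul, hAx]
    by_cases hab : a = b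
    · subst hab
      rw [if_pos rfl, if_pos rfl]
      have h1 : Real.sqrt (f (ι a)) ≠ 0 := Real.sqrt_ne_zero'.mpr (hfpos a)
      have h2 : Real.sqrt (f (ι a)) * Real.sqrt (f (ι a)) = f (ι a) :=
        Real.mul_self_sqrt (le_of_lt (hfpos a))
      simp only [smul_eq_mul]
      field_simp
      rw [sq, h2]
    · simp [hab]
  · intro a b
    rw [smul_dotProduct, hAx]
    by_cases hab : a = b
    · subst hab
      rw [if_pos rfl, if_pos rfl]
      have h2 : Real.sqrt (f (ι a)) * Real.sqrt (f (ι a)) = f (ι a) :=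
        Real.mul_self_sqrt (le_of_lt (hfpos a))
      have h1 : Real.sqrt (f (ι a)) ≠ 0 := Real.sqrt_ne_zero'.mpr (hfpos a)
      simp only [smul_eq_mul]
      field_simp
      rw [sq, h2]
    · simp [hab]
  · intro a
    have := hfge a
    calc sval A j = Real.sqrt ((sval A j) ^ 2) := by
          rw [Real.sqrt_sq (le_of_lt hpos)]
      _ ≤ Real.sqrt (f (ι a)) := Real.sqrt_le_sqrt this

end C

section D
variable {m n : ℕ}

lemma dot_sum_sum' {j n : ℕ} (c d : Fin j → ℝ) (w z : Fin j → Fin n → ℝ) :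
    (∑ i, c i • w i) ⬝ᵥ (∑ k, d k • z k) = ∑ i, ∑ k, c i * d k * (w i ⬝ᵥ z k) := by
  simp only [dotProduct, Finset.sum_apply, Pi.smul_apply, smul_eq_mul,
    Finset.sum_mul, Finset.mul_sum]
  rw [Finset.sum_comm]
  conv_rhs => rw [Finset.sum_comm]
  refine Finset.sum_congr rfl fun i _ => ?_
  rw [Finset.sum_comm]
  refine Finset.sum_congr rfl fun k _ => Finset.sum_congr rfl fun q _ => by ring

lemma mulVec_sum_smul' {j : ℕ} (M : Matrix (Fin m) (Fin n) ℝ) (c : Fin j → ℝ)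
    (w : Fin j → Fin n → ℝ) :
    M *ᵥ (∑ i, c i • w i) = ∑ i, c i • (M *ᵥ w i) := by
  have h : M *ᵥ (∑ i, c i • w i) = M.mulVecLin (∑ i, c i • w i) := rfl
  rw [h, map_sum]
  simp [Matrix.mulVecLin_apply]

lemma CF (M : Matrix (Fin m) (Fin n) ℝ) {j : ℕ} (hj1 : 1 ≤ j) (hjn : j ≤ n) {s : ℝ}
    (hs : 0 ≤ s) (x : Fin j → EuclideanSpace ℝ (Fin n)) (hxon : Orthonormal ℝ x)
    (hbound : ∀ v : EuclideanSpace ℝ (Fin n), v ∈ Submodule.span ℝ (Set.range x) →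
      s ^ 2 * ((v : Fin n → ℝ) ⬝ᵥ (v : Fin n → ℝ)) ≤
        (M *ᵥ (v : Fin n → ℝ)) ⬝ᵥ (M *ᵥ (v : Fin n → ℝ))) :
    s ≤ sval M j := by
  have hn : 1 ≤ n := le_trans hj1 hjn
  set hH := Matrix.isHermitian_transpose_mul_self M with hHdef
  set f := hH.eigenvalues with hfdef
  set g := Tuple.sort f with hgdef
  have hmono : Monotone (f ∘ g) := Tuple.monotone_sort f
  have hj1n : j - 1 < n := by omega
  have hrev : (Fin.rev ⟨j - 1, hj1n⟩ : Fin n) = ⟨n - j, by omega⟩ := by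
    ext; simp [Fin.rev]; omega
  have hsv : sval M j = Real.sqrt ((f ∘ g) ⟨n - j, by omega⟩) := by
    rw [sval, dif_pos hj1n, ← hrev]
  set top := (f ∘ g) (⟨n - j, by omega⟩ : Fin n) with htop
  -- the subspace spanned by bottom n-j+1 eigenvectors
  set κ : Fin (n - j + 1) → Fin n := fun i => g ⟨i.1, by omega⟩ with hκ
  have hκinj : Function.Injective κ := by
    intro a b hab
    have : a.1 = b.1 := by simpa using congrArg Fin.val (g.injective hab)
    exact Fin.ext this
  set w : Fin (n - j + 1) → EuclideanSpace ℝ (Fin n) := fun i => hH.eigenvectorBasis (κ i)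
    with hw
  have hwon : Orthonormal ℝ w := hH.eigenvectorBasis.orthonormal.comp κ hκinj
  have hwdot : ∀ a b, (w a : Fin n → ℝ) ⬝ᵥ (w b : Fin n → ℝ) = if a = b then 1 else 0 := by
    intro a b
    rw [hw, eigB_dot M (κ a) (κ b)]
    by_cases hab : a = b
    · simp [hab]
    · rw [if_neg (fun h => hab (hκinj h)), if_neg hab]
  set W := Submodule.span ℝ (Set.range x) with hW
  set K := Submodule.span ℝ (Set.range w) with hK
  have hdimW : Module.finrank ℝ W = j := by
    rw [hW, finrank_span_eq_card hxon.linearIndependent, Fintype.card_fin]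
  have hdimK : Module.finrank ℝ K = n - j + 1 := by
    rw [hK, finrank_span_eq_card hwon.linearIndependent, Fintype.card_fin]
  have hne : W ⊓ K ≠ ⊥ := by
    intro hbot
    have h1 := Submodule.finrank_sup_add_finrank_inf_eq W K
    rw [hbot] at h1
    have h2 : Module.finrank ℝ (W ⊔ K : Submodule ℝ (EuclideanSpace ℝ (Fin n))) ≤ n := by
      have := Submodule.finrank_le (W ⊔ K)
      rwa [finrank_euclideanSpace_fin] at this
    rw [hdimW, hdimK] at h1
    simp [finrank_bot] at h1
    omega
  obtain ⟨v, hv, hvne⟩ := (Submodule.ne_bot_iff _).mp hne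
  obtain ⟨hvW, hvK⟩ := Submodule.mem_inf.mp hv
  obtain ⟨c, hc⟩ := (Submodule.mem_span_range_iff_exists_fun ℝ).mp hvK
  -- quadratic form value
  have heig : ∀ i, (Mᵀ * M) *ᵥ (w i : Fin n → ℝ) = f (κ i) • (w i : Fin n → ℝ) := fun i =>
    eigB_mulVec M (κ i)
  have hMv : (M *ᵥ (v : Fin n → ℝ)) ⬝ᵥ (M *ᵥ (v : Fin n → ℝ)) =
      ∑ i, (c i)^2 * f (κ i) := by
    rw [← dot_AtA, ← hc]
    have h1 : (Mᵀ * M) *ᵥ ((∑ i, c i • w i : EuclideanSpace ℝ (Fin n)) : Fin n → ℝ) =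
        ∑ i, (c i * f (κ i)) • (w i : Fin n → ℝ) := by
      rw [show ((∑ i, c i • w i : EuclideanSpace ℝ (Fin n)) : Fin n → ℝ) =
        ∑ i, c i • (w i : Fin n → ℝ) from by simp [WithLp.ofLp_sum]]
      rw [mulVec_sum_smul']
      refine Finset.sum_congr rfl fun i _ => ?_
      rw [heig, smul_smul]
    rw [h1, show ((∑ i, c i • w i : EuclideanSpace ℝ (Fin n)) : Fin n → ℝ) =
      ∑ i, c i • (w i : Fin n → ℝ) from by simp [WithLp.ofLp_sum], dot_sum_sum']
    refine Finset.sum_congr rfl fun i _ => ?_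
    have : ∀ k, c i * (c k * f (κ k)) * ((w i : Fin n → ℝ) ⬝ᵥ (w k : Fin n → ℝ)) =
        if i = k then (c i)^2 * f (κ i) else 0 := by
      intro k
      rw [hwdot]
      by_cases hik : i = k
      · subst hik; simp; ring
      · simp [hik]
    rw [Finset.sum_congr rfl fun k _ => this k, Finset.sum_ite_eq]
    simp
  have hvv : (v : Fin n → ℝ) ⬝ᵥ (v : Fin n → ℝ) = ∑ i, (c i)^2 := by
    rw [← hc]
    rw [show ((∑ i, c i • w i : EuclideanSpace ℝ (Fin n)) : Fin n → ℝ) =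
      ∑ i, c i • (w i : Fin n → ℝ) from by simp [WithLp.ofLp_sum], dot_sum_sum']
    refine Finset.sum_congr rfl fun i _ => ?_
    have : ∀ k, c i * c k * ((w i : Fin n → ℝ) ⬝ᵥ (w k : Fin n → ℝ)) =
        if i = k then (c i)^2 else 0 := by
      intro k
      rw [hwdot]
      by_cases hik : i = k
      · subst hik; simp; ring
      · simp [hik]
    rw [Finset.sum_congr rfl fun k _ => this k, Finset.sum_ite_eq]
    simp
  have hfle : ∀ i : Fin (n - j + 1), f (κ i) ≤ top := by
    intro i
    have : ((⟨i.1, by omega⟩ : Fin n)) ≤ ⟨n - j, by omega⟩ := by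
      simp [Fin.mk_le_mk]; omega
    exact hmono this
  have hub : (M *ᵥ (v : Fin n → ℝ)) ⬝ᵥ (M *ᵥ (v : Fin n → ℝ)) ≤
      top * ((v : Fin n → ℝ) ⬝ᵥ (v : Fin n → ℝ)) := by
    rw [hMv, hvv, Finset.mul_sum]
    refine Finset.sum_le_sum fun i _ => ?_
    rw [mul_comm top _]
    exact mul_le_mul_of_nonneg_left (hfle i) (sq_nonneg _)
  have hpos : 0 < (v : Fin n → ℝ) ⬝ᵥ (v : Fin n → ℝ) :=
    lt_of_le_of_ne (Finset.sum_nonneg fun _ _ => mul_self_nonneg _)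
      (fun h => hvne ((WithLp.ofLp_eq_zero 2).mp (dotProduct_self_eq_zero.mp h.symm)))
  have hlb := hbound v hvW
  have hs2 : s ^ 2 ≤ top := by
    have h := le_trans hlb hub
    nlinarith [hpos]
  calc s = Real.sqrt (s ^ 2) := (Real.sqrt_sq hs).symm
    _ ≤ Real.sqrt top := Real.sqrt_le_sqrt hs2
    _ = sval M j := hsv.symm

end D

section Net
open scoped ENNReal

lemma pack_card {j : ℕ} (P : Finset (EuclideanSpace ℝ (Fin j)))
    (hP : ∀ p ∈ P, ‖p‖ = 1)
    (hsep : ∀ p ∈ P, ∀ q ∈ P, p ≠ q → 1/4 < dist p q) :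
    P.card ≤ 9 ^ j := by
  set μ := (volume : Measure (EuclideanSpace ℝ (Fin j)))
  have hdisj : (P : Set (EuclideanSpace ℝ (Fin j))).PairwiseDisjoint
      (fun p => Metric.closedBall p (1/8)) := by
    intro p hp q hq hpq
    exact Metric.closedBall_disjoint_closedBall (by linarith [hsep p hp q hq hpq])
  have hmeas : ∀ p ∈ P, MeasurableSet (Metric.closedBall p (1/8)) :=
    fun p _ => measurableSet_closedBall
  have hunion : μ (⋃ p ∈ P, Metric.closedBall p (1/8)) =
      ∑ p ∈ P, μ (Metric.closedBall p (1/8)) :=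
    measure_biUnion_finset hdisj hmeas
  have hball : ∀ p : EuclideanSpace ℝ (Fin j), μ (Metric.closedBall p (1/8)) =
      ENNReal.ofReal ((1/8 : ℝ) ^ j) * μ (Metric.ball 0 1) := by
    intro p
    rw [Measure.addHaar_closedBall μ p (by norm_num : (0:ℝ) ≤ 1/8)]
    congr 2
    rw [finrank_euclideanSpace_fin]
  have hsub : (⋃ p ∈ P, Metric.closedBall p (1/8)) ⊆ Metric.closedBall 0 (9/8) := by
    intro z hz
    simp only [Set.mem_iUnion] at hz
    obtain ⟨p, hp, hzp⟩ := hz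
    rw [Metric.mem_closedBall] at *
    calc dist z 0 ≤ dist z p + dist p 0 := dist_triangle _ _ _
      _ ≤ 1/8 + 1 := by
          refine add_le_add hzp ?_
          rw [dist_zero_right, hP p hp]
      _ ≤ 9/8 := by norm_num
  have hbig : μ (Metric.closedBall 0 (9/8)) =
      ENNReal.ofReal ((9/8 : ℝ) ^ j) * μ (Metric.ball 0 1) := by
    rw [Measure.addHaar_closedBall μ 0 (by norm_num : (0:ℝ) ≤ 9/8)]
    congr 2
    rw [finrank_euclideanSpace_fin]
  have hvpos : 0 < μ (Metric.ball 0 1) := Metric.measure_ball_pos μ 0 (by norm_num)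
  have hvfin : μ (Metric.ball 0 1) < ⊤ := measure_ball_lt_top
  have hchain : (P.card : ℝ≥0∞) * (ENNReal.ofReal ((1/8 : ℝ) ^ j) * μ (Metric.ball 0 1)) ≤
      ENNReal.ofReal ((9/8 : ℝ) ^ j) * μ (Metric.ball 0 1) := by
    calc (P.card : ℝ≥0∞) * (ENNReal.ofReal ((1/8 : ℝ) ^ j) * μ (Metric.ball 0 1))
        = ∑ p ∈ P, μ (Metric.closedBall p (1/8)) := by
          rw [Finset.sum_congr rfl fun p _ => hball p, Finset.sum_const, nsmul_eq_mul]
      _ = μ (⋃ p ∈ P, Metric.closedBall p (1/8)) := hunion.symm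
      _ ≤ μ (Metric.closedBall 0 (9/8)) := measure_mono hsub
      _ = _ := hbig
  -- cancel the ball volume
  have hx : (P.card : ℝ≥0∞) * ENNReal.ofReal ((1/8 : ℝ) ^ j) ≤
      ENNReal.ofReal ((9/8 : ℝ) ^ j) := by
    rw [← mul_assoc] at hchain
    exact (ENNReal.mul_le_mul_iff_left (ne_of_gt hvpos) (ne_of_lt hvfin)).mp hchain
  have hmul := mul_le_mul_left hx (ENNReal.ofReal ((8 : ℝ) ^ j))
  rw [mul_assoc, ← ENNReal.ofReal_mul (by positivity), ← ENNReal.ofReal_mul (by positivity),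
    ← mul_pow, ← mul_pow] at hmul
  norm_num at hmul
  have h9 : ((9 : ℝ) ^ j) = ((9 ^ j : ℕ) : ℝ) := by push_cast; ring
  exact_mod_cast hmul

end Net

section Net2

lemma net_exists (j : ℕ) : ∃ N : Finset (EuclideanSpace ℝ (Fin j)),
    (∀ p ∈ N, ‖p‖ = 1) ∧ N.card ≤ 9 ^ j ∧
    ∀ c : EuclideanSpace ℝ (Fin j), ‖c‖ = 1 → ∃ p ∈ N, dist c p ≤ 1/4 := by
  classical
  set S : Set ℕ := {k | ∃ F : Finset (EuclideanSpace ℝ (Fin j)),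
    ((∀ p ∈ F, ‖p‖ = 1) ∧ ∀ p ∈ F, ∀ q ∈ F, p ≠ q → 1/4 < dist p q) ∧ F.card = k} with hS
  have h0 : (0 : ℕ) ∈ S := ⟨∅, ⟨by simp, by simp⟩, rfl⟩
  have hbdd : BddAbove S := by
    refine ⟨9 ^ j, fun k hk => ?_⟩
    obtain ⟨F, hF, hk⟩ := hk
    exact hk ▸ pack_card F hF.1 hF.2
  obtain ⟨F, hF, hFcard⟩ := Nat.sSup_mem ⟨0, h0⟩ hbdd
  refine ⟨F, hF.1, ?_, ?_⟩
  · rw [hFcard]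
    exact csSup_le ⟨0, h0⟩ fun k hk => by
      obtain ⟨G, hG, hkk⟩ := hk
      exact hkk ▸ pack_card G hG.1 hG.2
  · intro c hc
    by_contra hcon
    push_neg at hcon
    have hcF : c ∉ F := fun hmem => by
      have h := hcon c hmem
      rw [dist_self] at h
      linarith
    have hgood : (∀ p ∈ insert c F, ‖p‖ = 1) ∧
        ∀ p ∈ insert c F, ∀ q ∈ insert c F, p ≠ q → 1/4 < dist p q := by
      constructor
      · intro p hp
        rcases Finset.mem_insert.mp hp with rfl | hp
        · exact hc
        · exact hF.1 p hp
      · intro p hp q hq hpq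
        rcases Finset.mem_insert.mp hp with hp' | hp'
        · rcases Finset.mem_insert.mp hq with hq' | hq'
          · exact absurd (hp'.trans hq'.symm) hpq
          · subst hp'; exact hcon q hq'
        · rcases Finset.mem_insert.mp hq with hq' | hq'
          · subst hq'; rw [dist_comm]; exact hcon p hp'
          · exact hF.2 p hp' q hq' hpq
    have hmem : F.card + 1 ∈ S := ⟨insert c F, hgood, by
      rw [Finset.card_insert_of_notMem hcF]⟩
    have := le_csSup hbdd hmem
    omega

end Net2

section DET
variable {m n : ℕ}

lemma dot_cs {k : ℕ} (u w : Fin k → ℝ) : (u ⬝ᵥ w)^2 ≤ (u ⬝ᵥ u) * (w ⬝ᵥ w) := by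
  have h := real_inner_mul_inner_self_le (F := EuclideanSpace ℝ (Fin k)) (WithLp.toLp 2 u) (WithLp.toLp 2 w)
  simp only [PiLp.inner_apply, RCLike.inner_apply, conj_trivial] at h
  calc (u ⬝ᵥ w)^2 = (∑ i, u i * w i) * (∑ i, u i * w i) := by rw [sq]; rfl
    _ ≤ _ := by convert h using 2 <;> simp only [dotProduct, mul_comm]
    
lemma unit_sum_sq {k : ℕ} (e : EuclideanSpace ℝ (Fin k)) (he : ‖e‖ = 1) :
    ∑ i, (e i)^2 = 1 := by
  rw [EuclideanSpace.norm_eq] at he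
  have := Real.sqrt_eq_one.mp (by simpa using he)
  simpa [Real.norm_eq_abs, sq_abs] using this

lemma sum_pair_diag {j : ℕ} (c : Fin j → ℝ) (φ : Fin j → ℝ) :
    ∑ a, ∑ b, c a * c b * (if a = b then φ a else 0) = ∑ a, (c a)^2 * φ a := by
  refine Finset.sum_congr rfl fun a _ => ?_
  have h : ∀ b, c a * c b * (if a = b then φ a else 0) =
      if a = b then (c a)^2 * φ a else 0 := by
    intro b
    by_cases hab : a = b
    · subst hab; rw [if_pos rfl, if_pos rfl]; ring
    · rw [if_neg hab, if_neg hab]; ring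
  rw [Finset.sum_congr rfl fun b _ => h b, Finset.sum_ite_eq]
  simp

lemma det_key (A F : Matrix (Fin m) (Fin n) ℝ) {j : ℕ} (hj1 : 1 ≤ j) (hjn : j ≤ n)
    (x : Fin j → EuclideanSpace ℝ (Fin n)) (y : Fin j → Fin m → ℝ) (σ : Fin j → ℝ)
    (hxon : Orthonormal ℝ x)
    (hxdot : ∀ a b, (x a : Fin n → ℝ) ⬝ᵥ (x b : Fin n → ℝ) = if a = b then 1 else 0)
    (hydot : ∀ a b, y a ⬝ᵥ y b = if a = b then 1 else 0)
    (hyAx : ∀ a b, y a ⬝ᵥ (A *ᵥ (x b : Fin n → ℝ)) = if a = b then σ a else 0)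
    (hσ : ∀ a, sval A j ≤ σ a)
    (N : Finset (EuclideanSpace ℝ (Fin j)))
    (hNunit : ∀ p ∈ N, ‖p‖ = 1)
    (hNnet : ∀ c : EuclideanSpace ℝ (Fin j), ‖c‖ = 1 → ∃ p ∈ N, dist c p ≤ 1/4)
    (t : ℝ) (ht : 0 < t)
    (hsmall : ∀ p ∈ N, |(∑ a, p a • y a) ⬝ᵥ (F *ᵥ (∑ b, p b • (x b : Fin n → ℝ)))| ≤ t/2) :
    sval A j - t ≤ sval (A + F) j := by
  rcases le_or_gt (sval A j - t) 0 with hst | hst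
  · exact le_trans hst (sval_nonneg _ _)
  set s := sval A j - t with hs
  -- abbreviations
  set uu : (Fin j → ℝ) → (Fin m → ℝ) := fun c => ∑ a, c a • y a with huu
  set vv : (Fin j → ℝ) → (Fin n → ℝ) := fun c => ∑ b, c b • (x b : Fin n → ℝ) with hvv
  set T : Fin j → Fin j → ℝ := fun a b => y a ⬝ᵥ (F *ᵥ (x b : Fin n → ℝ)) with hT
  set G : Matrix (Fin j) (Fin j) ℝ := fun a b => (T a b + T b a)/2 with hG
  have hGsym : Gᵀ = G := by
    ext a b; simp [hG, Matrix.transpose]; ring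
  -- quadratic form identity
  have hQ : ∀ c : Fin j → ℝ, uu c ⬝ᵥ (F *ᵥ vv c) = c ⬝ᵥ (G *ᵥ c) := by
    intro c
    rw [huu, hvv, mulVec_sum_smul', dot_sum_sum']
    have hrhs : c ⬝ᵥ (G *ᵥ c) = ∑ a, ∑ b, c a * c b * G a b := by
      simp only [dotProduct, Matrix.mulVec, Finset.mul_sum]
      exact Finset.sum_congr rfl fun a _ =>
        Finset.sum_congr rfl fun b _ => by ring
    rw [hrhs]
    have hswap : ∑ a, ∑ b, c a * c b * T b a = ∑ a, ∑ b, c a * c b * T a b := by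
      rw [Finset.sum_comm]
      exact Finset.sum_congr rfl fun a _ => Finset.sum_congr rfl fun b _ => by ring
    have : ∑ a, ∑ b, c a * c b * G a b
        = (∑ a, ∑ b, c a * c b * T a b)/2 + (∑ a, ∑ b, c a * c b * T b a)/2 := by
      rw [Finset.sum_div, Finset.sum_div, ← Finset.sum_add_distrib]
      refine Finset.sum_congr rfl fun a _ => ?_
      rw [Finset.sum_div, Finset.sum_div, ← Finset.sum_add_distrib]
      refine Finset.sum_congr rfl fun b _ => ?_
      simp only [hG]
      ring
    rw [this, hswap]
    ring
  -- symmetry of the bilinear form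
  have hbil_sym : ∀ a b : Fin j → ℝ, a ⬝ᵥ (G *ᵥ b) = b ⬝ᵥ (G *ᵥ a) := by
    intro a b
    rw [Matrix.dotProduct_mulVec]
    conv_lhs => rw [← hGsym]
    rw [Matrix.vecMul_transpose, dotProduct_comm]
  -- maximizer on the sphere
  have hcont : Continuous (fun c : EuclideanSpace ℝ (Fin j) =>
      |(c : Fin j → ℝ) ⬝ᵥ (G *ᵥ (c : Fin j → ℝ))|) := by
    refine Continuous.abs ?_
    simp only [dotProduct, Matrix.mulVec]
    refine continuous_finset_sum _ fun p _ => ?_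
    refine Continuous.mul ((EuclideanSpace.proj p).continuous)
      (continuous_finset_sum _ fun q _ => Continuous.mul continuous_const
        ((EuclideanSpace.proj q).continuous))
  have hsphne : (Metric.sphere (0 : EuclideanSpace ℝ (Fin j)) 1).Nonempty := by
    refine ⟨EuclideanSpace.single ⟨0, by omega⟩ (1:ℝ), ?_⟩
    rw [mem_sphere_zero_iff_norm, EuclideanSpace.norm_single]
    norm_num
  obtain ⟨c₀, hc₀mem, hc₀max⟩ := (isCompact_sphere (0 : EuclideanSpace ℝ (Fin j)) 1)
    |>.exists_isMaxOn hsphne hcont.continuousOn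
  set S₀ := |(c₀ : Fin j → ℝ) ⬝ᵥ (G *ᵥ (c₀ : Fin j → ℝ))| with hS₀
  have hS₀nonneg : 0 ≤ S₀ := abs_nonneg _
  have hc₀norm : ‖c₀‖ = 1 := mem_sphere_zero_iff_norm.mp hc₀mem
  have hmax : ∀ e : EuclideanSpace ℝ (Fin j), ‖e‖ = 1 →
      |(e : Fin j → ℝ) ⬝ᵥ (G *ᵥ (e : Fin j → ℝ))| ≤ S₀ := by
    intro e he
    exact hc₀max (mem_sphere_zero_iff_norm.mpr he)
  -- homogeneity
  have hhom : ∀ (r : ℝ) (c : Fin j → ℝ), (r • c) ⬝ᵥ (G *ᵥ (r • c)) = r^2 * (c ⬝ᵥ (G *ᵥ c)) := by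
    intro r c
    rw [Matrix.mulVec_smul, smul_dotProduct, dotProduct_smul]
    simp [smul_eq_mul]; ring
  have hQle : ∀ z : EuclideanSpace ℝ (Fin j),
      |(z : Fin j → ℝ) ⬝ᵥ (G *ᵥ (z : Fin j → ℝ))| ≤ S₀ * ‖z‖^2 := by
    intro z
    by_cases hz : z = 0
    · subst hz
      simp [zero_dotProduct]
    · have hnz : ‖z‖ ≠ 0 := norm_ne_zero_iff.mpr hz
      set zh : EuclideanSpace ℝ (Fin j) := ‖z‖⁻¹ • z with hzh
      have hzh1 : ‖zh‖ = 1 := by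
        rw [hzh, norm_smul, norm_inv, norm_norm, inv_mul_cancel₀ hnz]
      have hzz : (z : Fin j → ℝ) = ‖z‖ • (zh : Fin j → ℝ) := by
        rw [hzh]
        funext i
        simp [Pi.smul_apply, smul_eq_mul]
        field_simp
      conv_lhs => rw [hzz]
      rw [hhom, abs_mul, abs_of_nonneg (sq_nonneg ‖z‖)]
      have := hmax zh hzh1
      calc ‖z‖^2 * |(zh : Fin j → ℝ) ⬝ᵥ (G *ᵥ (zh : Fin j → ℝ))| ≤ ‖z‖^2 * S₀ :=
            mul_le_mul_of_nonneg_left this (sq_nonneg _)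
        _ = S₀ * ‖z‖^2 := by ring
  -- bilinear half-bound via polarization
  have hbil_half : ∀ a b : EuclideanSpace ℝ (Fin j),
      |(a : Fin j → ℝ) ⬝ᵥ (G *ᵥ (b : Fin j → ℝ))| ≤ S₀ * (‖a‖^2 + ‖b‖^2) / 2 := by
    intro a b
    have hpolar : (a : Fin j → ℝ) ⬝ᵥ (G *ᵥ (b : Fin j → ℝ)) =
        (((a + b : EuclideanSpace ℝ (Fin j)) : Fin j → ℝ) ⬝ᵥ
            (G *ᵥ ((a + b : EuclideanSpace ℝ (Fin j)) : Fin j → ℝ)) -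
          ((a - b : EuclideanSpace ℝ (Fin j)) : Fin j → ℝ) ⬝ᵥ
            (G *ᵥ ((a - b : EuclideanSpace ℝ (Fin j)) : Fin j → ℝ)))/4 := by
      have h1 : ((a + b : EuclideanSpace ℝ (Fin j)) : Fin j → ℝ)
          = (a : Fin j → ℝ) + (b : Fin j → ℝ) := rfl
      have h2 : ((a - b : EuclideanSpace ℝ (Fin j)) : Fin j → ℝ)
          = (a : Fin j → ℝ) - (b : Fin j → ℝ) := rfl
      rw [h1, h2, Matrix.mulVec_add, Matrix.mulVec_sub]
      rw [dotProduct_add, dotProduct_sub, add_dotProduct,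
        add_dotProduct, sub_dotProduct, sub_dotProduct]
      rw [hbil_sym (b : Fin j → ℝ) (a : Fin j → ℝ)]
      ring
    have hab1 := hQle (a + b)
    have hab2 := hQle (a - b)
    have hpar : ‖a + b‖^2 + ‖a - b‖^2 = 2*(‖a‖^2 + ‖b‖^2) := by
      have := parallelogram_law_with_norm ℝ a b
      nlinarith [this]
    rw [hpolar, abs_div, show |(4:ℝ)| = 4 by norm_num,
      div_le_div_iff₀ (by norm_num : (0:ℝ) < 4) (by norm_num : (0:ℝ) < 2)]
    calc |_ - _| * 2 ≤ (|((a + b : EuclideanSpace ℝ (Fin j)) : Fin j → ℝ) ⬝ᵥ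
            (G *ᵥ ((a + b : EuclideanSpace ℝ (Fin j)) : Fin j → ℝ))| +
          |((a - b : EuclideanSpace ℝ (Fin j)) : Fin j → ℝ) ⬝ᵥ
            (G *ᵥ ((a - b : EuclideanSpace ℝ (Fin j)) : Fin j → ℝ))|) * 2 :=
          mul_le_mul_of_nonneg_right (abs_sub _ _) (by norm_num)
      _ ≤ (S₀ * ‖a + b‖^2 + S₀ * ‖a - b‖^2) * 2 :=
          mul_le_mul_of_nonneg_right (add_le_add hab1 hab2) (by norm_num)
      _ = S₀ * (‖a + b‖^2 + ‖a - b‖^2) * 2 := by ring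
      _ = S₀ * (‖a‖^2 + ‖b‖^2) * 4 := by rw [hpar]; ring
  -- full bilinear product bound
  have hbilbound : ∀ a b : EuclideanSpace ℝ (Fin j),
      |(a : Fin j → ℝ) ⬝ᵥ (G *ᵥ (b : Fin j → ℝ))| ≤ S₀ * ‖a‖ * ‖b‖ := by
    intro a b
    by_cases ha : a = 0
    · subst ha; simp [zero_dotProduct]
    by_cases hb : b = 0
    · subst hb
      have : ((0 : EuclideanSpace ℝ (Fin j)) : Fin j → ℝ) = 0 := rfl
      rw [this, Matrix.mulVec_zero, dotProduct_zero]
      simp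
    have hna : ‖a‖ ≠ 0 := norm_ne_zero_iff.mpr ha
    have hnb : ‖b‖ ≠ 0 := norm_ne_zero_iff.mpr hb
    set ah : EuclideanSpace ℝ (Fin j) := ‖a‖⁻¹ • a with hah
    set bh : EuclideanSpace ℝ (Fin j) := ‖b‖⁻¹ • b with hbh
    have hah1 : ‖ah‖ = 1 := by rw [hah, norm_smul, norm_inv, norm_norm, inv_mul_cancel₀ hna]
    have hbh1 : ‖bh‖ = 1 := by rw [hbh, norm_smul, norm_inv, norm_norm, inv_mul_cancel₀ hnb]
    have hhalf := hbil_half ah bh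
    rw [hah1, hbh1] at hhalf
    have hhalf' : |(ah : Fin j → ℝ) ⬝ᵥ (G *ᵥ (bh : Fin j → ℝ))| ≤ S₀ := by
      calc |(ah : Fin j → ℝ) ⬝ᵥ (G *ᵥ (bh : Fin j → ℝ))| ≤ S₀ * (1^2 + 1^2) / 2 := hhalf
        _ = S₀ := by ring
    have hsc : (a : Fin j → ℝ) ⬝ᵥ (G *ᵥ (b : Fin j → ℝ)) =
        ‖a‖ * ‖b‖ * ((ah : Fin j → ℝ) ⬝ᵥ (G *ᵥ (bh : Fin j → ℝ))) := by
      have h1 : (ah : Fin j → ℝ) = ‖a‖⁻¹ • (a : Fin j → ℝ) := rfl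
      have h2 : (bh : Fin j → ℝ) = ‖b‖⁻¹ • (b : Fin j → ℝ) := rfl
      rw [h1, h2, Matrix.mulVec_smul, smul_dotProduct, dotProduct_smul]
      simp only [smul_eq_mul]
      field_simp
    rw [hsc, abs_mul, abs_mul, abs_of_nonneg (norm_nonneg a), abs_of_nonneg (norm_nonneg b)]
    calc ‖a‖ * ‖b‖ * |(ah : Fin j → ℝ) ⬝ᵥ (G *ᵥ (bh : Fin j → ℝ))| ≤ ‖a‖ * ‖b‖ * S₀ := by
          refine mul_le_mul_of_nonneg_left hhalf' ?_
          positivity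
      _ = S₀ * ‖a‖ * ‖b‖ := by ring
  -- net argument: S₀ ≤ t
  have hS₀t : S₀ ≤ t := by
    obtain ⟨p, hpN, hpd⟩ := hNnet c₀ hc₀norm
    have hp1 : ‖p‖ = 1 := hNunit p hpN
    have hdiff : (c₀ : Fin j → ℝ) ⬝ᵥ (G *ᵥ (c₀ : Fin j → ℝ)) -
        (p : Fin j → ℝ) ⬝ᵥ (G *ᵥ (p : Fin j → ℝ)) =
        ((c₀ + p : EuclideanSpace ℝ (Fin j)) : Fin j → ℝ) ⬝ᵥ
          (G *ᵥ ((c₀ - p : EuclideanSpace ℝ (Fin j)) : Fin j → ℝ)) := by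
      have h1 : ((c₀ + p : EuclideanSpace ℝ (Fin j)) : Fin j → ℝ)
          = (c₀ : Fin j → ℝ) + (p : Fin j → ℝ) := rfl
      have h2 : ((c₀ - p : EuclideanSpace ℝ (Fin j)) : Fin j → ℝ)
          = (c₀ : Fin j → ℝ) - (p : Fin j → ℝ) := rfl
      rw [h1, h2, Matrix.mulVec_sub, dotProduct_sub, add_dotProduct,
        add_dotProduct]
      rw [hbil_sym (p : Fin j → ℝ) (c₀ : Fin j → ℝ)]
      ring
    have hQp : |(p : Fin j → ℝ) ⬝ᵥ (G *ᵥ (p : Fin j → ℝ))| ≤ t/2 := by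
      rw [← hQ]
      exact hsmall p hpN
    have hnsum : ‖c₀ + p‖ ≤ 2 := by
      calc ‖c₀ + p‖ ≤ ‖c₀‖ + ‖p‖ := norm_add_le _ _
        _ = 2 := by rw [hc₀norm, hp1]; norm_num
    have hndiff : ‖c₀ - p‖ ≤ 1/4 := by
      rw [← dist_eq_norm]; exact hpd
    have hcross := hbilbound (c₀ + p) (c₀ - p)
    have hcross' : |((c₀ + p : EuclideanSpace ℝ (Fin j)) : Fin j → ℝ) ⬝ᵥ
        (G *ᵥ ((c₀ - p : EuclideanSpace ℝ (Fin j)) : Fin j → ℝ))| ≤ S₀ / 2 := by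
      calc |((c₀ + p : EuclideanSpace ℝ (Fin j)) : Fin j → ℝ) ⬝ᵥ
          (G *ᵥ ((c₀ - p : EuclideanSpace ℝ (Fin j)) : Fin j → ℝ))|
          ≤ S₀ * ‖c₀ + p‖ * ‖c₀ - p‖ := hcross
        _ ≤ S₀ * 2 * (1/4) := by
            refine mul_le_mul (mul_le_mul_of_nonneg_left hnsum hS₀nonneg) hndiff
              (norm_nonneg _) (by positivity)
        _ = S₀ / 2 := by ring
    have : S₀ ≤ t/2 + S₀/2 := by
      calc S₀ = |(c₀ : Fin j → ℝ) ⬝ᵥ (G *ᵥ (c₀ : Fin j → ℝ))| := rfl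
        _ ≤ |(p : Fin j → ℝ) ⬝ᵥ (G *ᵥ (p : Fin j → ℝ))| +
            |(c₀ : Fin j → ℝ) ⬝ᵥ (G *ᵥ (c₀ : Fin j → ℝ)) -
              (p : Fin j → ℝ) ⬝ᵥ (G *ᵥ (p : Fin j → ℝ))| := by
            have := abs_sub_abs_le_abs_sub ((c₀ : Fin j → ℝ) ⬝ᵥ (G *ᵥ (c₀ : Fin j → ℝ)))
              ((p : Fin j → ℝ) ⬝ᵥ (G *ᵥ (p : Fin j → ℝ)))
            linarith [abs_nonneg ((p : Fin j → ℝ) ⬝ᵥ (G *ᵥ (p : Fin j → ℝ)))]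
        _ ≤ t/2 + S₀/2 := by
            rw [hdiff]
            exact add_le_add hQp hcross'
    linarith
  -- pointwise lower bound on unit combinations
  have hkey : ∀ e : EuclideanSpace ℝ (Fin j), ‖e‖ = 1 →
      s ≤ uu (e : Fin j → ℝ) ⬝ᵥ ((A + F) *ᵥ vv (e : Fin j → ℝ)) := by
    intro e he
    have hsum : ∑ a, (e a)^2 = 1 := unit_sum_sq e he
    have hA : uu (e : Fin j → ℝ) ⬝ᵥ (A *ᵥ vv (e : Fin j → ℝ)) = ∑ a, (e a)^2 * σ a := by
      rw [huu, hvv, mulVec_sum_smul', dot_sum_sum']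
      rw [Finset.sum_congr rfl fun a _ => Finset.sum_congr rfl fun b _ => by rw [hyAx]]
      exact sum_pair_diag _ _
    have hAge : sval A j ≤ uu (e : Fin j → ℝ) ⬝ᵥ (A *ᵥ vv (e : Fin j → ℝ)) := by
      rw [hA]
      calc sval A j = ∑ a, (e a)^2 * sval A j := by
            rw [← Finset.sum_mul, hsum, one_mul]
        _ ≤ ∑ a, (e a)^2 * σ a :=
            Finset.sum_le_sum fun a _ => mul_le_mul_of_nonneg_left (hσ a) (sq_nonneg _)
    have hF : -t ≤ uu (e : Fin j → ℝ) ⬝ᵥ (F *ᵥ vv (e : Fin j → ℝ)) := by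
      rw [hQ]
      have h1 := hmax e he
      have h2 : |(e : Fin j → ℝ) ⬝ᵥ (G *ᵥ (e : Fin j → ℝ))| ≤ t := le_trans h1 hS₀t
      linarith [neg_abs_le ((e : Fin j → ℝ) ⬝ᵥ (G *ᵥ (e : Fin j → ℝ)))]
    have hadd : (A + F) *ᵥ vv (e : Fin j → ℝ) =
        A *ᵥ vv (e : Fin j → ℝ) + F *ᵥ vv (e : Fin j → ℝ) := Matrix.add_mulVec _ _ _
    rw [hadd, dotProduct_add]
    rw [hs]
    linarith
  -- apply Courant--Fischer
  refine CF (A + F) hj1 hjn (le_of_lt hst) x hxon ?_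
  intro v hv
  obtain ⟨c, hc⟩ := (Submodule.mem_span_range_iff_exists_fun ℝ).mp hv
  set cE : EuclideanSpace ℝ (Fin j) := WithLp.toLp 2 c with hcE
  have hvc : (v : Fin n → ℝ) = vv c := by
    rw [hvv, ← hc]
    simp [WithLp.ofLp_sum]
  have hvvdot : (v : Fin n → ℝ) ⬝ᵥ (v : Fin n → ℝ) = ∑ a, (c a)^2 := by
    rw [hvc, hvv, dot_sum_sum']
    rw [Finset.sum_congr rfl fun a _ => Finset.sum_congr rfl fun b _ => by rw [hxdot]]
    have := sum_pair_diag c (fun _ => (1:ℝ))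
    simpa using this
  by_cases hc0 : c = 0
  · subst hc0
    have : vv (0 : Fin j → ℝ) = 0 := by
      rw [hvv]; simp
    rw [hvc, this]
    simp [Matrix.mulVec_zero, dotProduct_zero]
  · have hcnorm : ‖cE‖^2 = ∑ a, (c a)^2 := by
      rw [EuclideanSpace.norm_eq, Real.sq_sqrt (Finset.sum_nonneg fun _ _ => by positivity)]
      refine Finset.sum_congr rfl fun a _ => ?_
      rw [Real.norm_eq_abs, sq_abs]
    have hcnz : ‖cE‖ ≠ 0 := by
      rw [hcE]
      exact norm_ne_zero_iff.mpr (by simpa using hc0)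
    set ch : EuclideanSpace ℝ (Fin j) := ‖cE‖⁻¹ • cE with hch
    have hch1 : ‖ch‖ = 1 := by rw [hch, norm_smul, norm_inv, norm_norm, inv_mul_cancel₀ hcnz]
    have hkey' := hkey ch hch1
    -- unit norm of uu ch
    have huuch : uu (ch : Fin j → ℝ) ⬝ᵥ uu (ch : Fin j → ℝ) = 1 := by
      rw [huu, dot_sum_sum']
      rw [Finset.sum_congr rfl fun a _ => Finset.sum_congr rfl fun b _ => by rw [hydot]]
      have := sum_pair_diag (ch : Fin j → ℝ) (fun _ => (1:ℝ))
      simp only [mul_one] at this ⊢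
      rw [this]
      exact unit_sum_sq ch hch1
    -- Cauchy--Schwarz
    have hcs := dot_cs (uu (ch : Fin j → ℝ)) ((A + F) *ᵥ vv (ch : Fin j → ℝ))
    rw [huuch, one_mul] at hcs
    have hs2 : s^2 ≤ ((A + F) *ᵥ vv (ch : Fin j → ℝ)) ⬝ᵥ ((A + F) *ᵥ vv (ch : Fin j → ℝ)) := by
      have h1 : s^2 ≤ (uu (ch : Fin j → ℝ) ⬝ᵥ ((A + F) *ᵥ vv (ch : Fin j → ℝ)))^2 :=
        pow_le_pow_left₀ (le_of_lt hst) hkey' 2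
      exact le_trans h1 hcs
    -- rescale
    have hscale : vv (ch : Fin j → ℝ) = ‖cE‖⁻¹ • vv c := by
      rw [hvv, Finset.smul_sum]
      exact Finset.sum_congr rfl fun b _ => by rw [smul_smul]; rfl
    have hfinal : ((A + F) *ᵥ vv (ch : Fin j → ℝ)) ⬝ᵥ ((A + F) *ᵥ vv (ch : Fin j → ℝ))
        = ‖cE‖⁻¹^2 * (((A + F) *ᵥ vv c) ⬝ᵥ ((A + F) *ᵥ vv c)) := by
      rw [hscale, Matrix.mulVec_smul, smul_dotProduct, dotProduct_smul]
      simp only [smul_eq_mul]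
      ring
    rw [hfinal] at hs2
    have hcsq : (v : Fin n → ℝ) ⬝ᵥ (v : Fin n → ℝ) = ‖cE‖^2 := by rw [hvvdot, hcnorm]
    have h2 : s^2 * ‖cE‖^2 ≤ ((A + F) *ᵥ vv c) ⬝ᵥ ((A + F) *ᵥ vv c) := by
      have hpos : (0:ℝ) < ‖cE‖^2 := by
        have := norm_pos_iff.mpr (show cE ≠ 0 from by simpa [hcE] using hc0)
        positivity
      have h3 : ‖cE‖⁻¹^2 * (((A + F) *ᵥ vv c) ⬝ᵥ ((A + F) *ᵥ vv c))
          = (((A + F) *ᵥ vv c) ⬝ᵥ ((A + F) *ᵥ vv c)) / ‖cE‖^2 := by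
        rw [inv_pow]; ring
      rw [h3] at hs2
      rw [le_div_iff₀ hpos] at hs2
      linarith
    calc s ^ 2 * ((v : Fin n → ℝ) ⬝ᵥ (v : Fin n → ℝ)) = s^2 * ‖cE‖^2 := by rw [hcsq]
      _ ≤ ((A + F) *ᵥ vv c) ⬝ᵥ ((A + F) *ᵥ vv c) := h2
      _ = ((A + F) *ᵥ (v : Fin n → ℝ)) ⬝ᵥ ((A + F) *ᵥ (v : Fin n → ℝ)) := by rw [hvc]

end DET


theorem stmt9 {m n : ℕ} (C₁ c₁ γ : ℝ) (hC₁ : 0 < C₁) (hc₁ : 0 < c₁) (hγ : 0 < γ)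
    {Ω : Type*} [MeasurableSpace Ω] (μ : Measure Ω) [IsProbabilityMeasure μ]
    (E : Ω → Matrix (Fin m) (Fin n) ℝ) (hE : Concentrated μ E C₁ c₁ γ)
    (A : Matrix (Fin m) (Fin n) ℝ) (r : ℕ) (hr : A.rank = r) (hσr : 0 < sval A r)
    (j : ℕ) (hj1 : 1 ≤ j) (hjr : j ≤ r)
    (t : ℝ) (ht : 0 < t) :
    ENNReal.ofReal (1 - 2 * C₁ * 9 ^ j * Real.exp (-c₁ * t ^ γ / 4 ^ γ)) ≤
      μ {ω | sval A j - t ≤ sval (A + E ω) j} := by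

  classical
  have hΔnonneg : (0:ℝ) ≤ 2 * C₁ * 9 ^ j * Real.exp (-c₁ * t ^ γ / 4 ^ γ) := by positivity
  by_cases hcase : sval A j - t ≤ 0
  · have hset : {ω | sval A j - t ≤ sval (A + E ω) j} = Set.univ := by
      ext ω
      simp only [Set.mem_setOf_eq, Set.mem_univ, iff_true]
      exact le_trans hcase (sval_nonneg _ _)
    rw [hset, measure_univ]
    exact le_trans (ENNReal.ofReal_le_one.mpr (by linarith)) le_rfl
  push_neg at hcase
  have hjn : j ≤ n := by
    have h1 : A.rank ≤ n := by
      have := Matrix.rank_le_card_width A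
      rwa [Fintype.card_fin] at this
    omega
  have hsvalpos : 0 < sval A j := by linarith
  obtain ⟨x, y, σ, hxon, hxdot, hydot, hyAx, hσ⟩ := exist_data A j hj1 hjn hsvalpos
  obtain ⟨N, hNunit, hNcard, hNnet⟩ := net_exists j
  set δ := C₁ * Real.exp (-c₁ * (t/2) ^ γ) with hδ
  have hδnonneg : 0 ≤ δ := by positivity
  set S : EuclideanSpace ℝ (Fin j) → Set Ω := fun p =>
    {ω | t/2 < |(∑ a, (p : Fin j → ℝ) a • y a) ⬝ᵥ
      ((E ω) *ᵥ (∑ b, (p : Fin j → ℝ) b • (x b : Fin n → ℝ)))|} with hSdef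
  have hunit_u : ∀ p : EuclideanSpace ℝ (Fin j), ‖p‖ = 1 →
      (∑ a, (p : Fin j → ℝ) a • y a) ⬝ᵥ (∑ a, (p : Fin j → ℝ) a • y a) = 1 := by
    intro p hp
    rw [dot_sum_sum']
    rw [Finset.sum_congr rfl fun a _ => Finset.sum_congr rfl fun b _ => by rw [hydot]]
    have h := sum_pair_diag (p : Fin j → ℝ) (fun _ => (1:ℝ))
    simp only [mul_one] at h ⊢
    rw [h]
    exact unit_sum_sq p hp
  have hunit_v : ∀ p : EuclideanSpace ℝ (Fin j), ‖p‖ = 1 →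
      (∑ b, (p : Fin j → ℝ) b • (x b : Fin n → ℝ)) ⬝ᵥ
        (∑ b, (p : Fin j → ℝ) b • (x b : Fin n → ℝ)) = 1 := by
    intro p hp
    rw [dot_sum_sum']
    rw [Finset.sum_congr rfl fun a _ => Finset.sum_congr rfl fun b _ => by rw [hxdot]]
    have h := sum_pair_diag (p : Fin j → ℝ) (fun _ => (1:ℝ))
    simp only [mul_one] at h ⊢
    rw [h]
    exact unit_sum_sq p hp
  have hSbound : ∀ p ∈ N, μ (S p) ≤ ENNReal.ofReal δ := by
    intro p hp
    exact hE _ _ (hunit_u p (hNunit p hp)) (hunit_v p (hNunit p hp)) (t/2) (by linarith)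
  have hsub : {ω | sval A j - t ≤ sval (A + E ω) j}ᶜ ⊆ ⋃ p ∈ N, S p := by
    intro ω hω
    by_contra hnot
    simp only [Set.mem_iUnion] at hnot
    push_neg at hnot
    apply hω
    refine det_key A (E ω) hj1 hjn x y σ hxon hxdot hydot hyAx hσ N hNunit hNnet t ht ?_
    intro p hp
    have h1 := hnot p hp
    rw [hSdef] at h1
    simp only [Set.mem_setOf_eq, not_lt] at h1
    exact h1
  have h9 : ((9:ℝ) ^ j) = ((9 ^ j : ℕ) : ℝ) := by push_cast; ring
  have hbad : μ ({ω | sval A j - t ≤ sval (A + E ω) j}ᶜ) ≤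
      ENNReal.ofReal ((9:ℝ)^j * δ) := by
    calc μ ({ω | sval A j - t ≤ sval (A + E ω) j}ᶜ) ≤ μ (⋃ p ∈ N, S p) := measure_mono hsub
      _ ≤ ∑ p ∈ N, μ (S p) := measure_biUnion_finset_le N S
      _ ≤ ∑ _p ∈ N, ENNReal.ofReal δ := Finset.sum_le_sum hSbound
      _ = (N.card : ℝ≥0∞) * ENNReal.ofReal δ := by rw [Finset.sum_const, nsmul_eq_mul]
      _ ≤ ((9 ^ j : ℕ) : ℝ≥0∞) * ENNReal.ofReal δ :=
          mul_le_mul_left (Nat.cast_le.mpr hNcard) _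
      _ = ENNReal.ofReal ((9:ℝ)^j) * ENNReal.ofReal δ := by rw [h9, ENNReal.ofReal_natCast]
      _ = ENNReal.ofReal ((9:ℝ)^j * δ) := by rw [← ENNReal.ofReal_mul (by positivity)]
  have hexp : (9:ℝ)^j * δ ≤ 2 * C₁ * 9 ^ j * Real.exp (-c₁ * t ^ γ / 4 ^ γ) := by
    have hdiv : (t/4) ^ γ = t ^ γ / 4 ^ γ := Real.div_rpow (le_of_lt ht) (by norm_num) γ
    have hmono : (t/4) ^ γ ≤ (t/2) ^ γ :=
      Real.rpow_le_rpow (by positivity) (by linarith) (le_of_lt hγ)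
    have hee : Real.exp (-c₁ * (t/2) ^ γ) ≤ Real.exp (-c₁ * t ^ γ / 4 ^ γ) := by
      rw [Real.exp_le_exp]
      have := mul_le_mul_of_nonneg_left hmono (le_of_lt hc₁)
      calc -c₁ * (t/2) ^ γ ≤ -c₁ * (t/4) ^ γ := by linarith
        _ = -c₁ * t ^ γ / 4 ^ γ := by rw [hdiv]; ring
    have h9p : (0:ℝ) < 9 ^ j := by positivity
    have he1 : 0 < Real.exp (-c₁ * (t/2) ^ γ) := Real.exp_pos _
    rw [hδ]
    nlinarith [mul_le_mul_of_nonneg_left hee (le_of_lt (mul_pos hC₁ h9p))]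
  have hbad2 : μ ({ω | sval A j - t ≤ sval (A + E ω) j}ᶜ) ≤
      ENNReal.ofReal (2 * C₁ * 9 ^ j * Real.exp (-c₁ * t ^ γ / 4 ^ γ)) :=
    le_trans hbad (ENNReal.ofReal_le_ofReal hexp)
  have huniv : (1:ℝ≥0∞) ≤ μ {ω | sval A j - t ≤ sval (A + E ω) j} +
      μ ({ω | sval A j - t ≤ sval (A + E ω) j}ᶜ) := by
    have h1 := measure_union_le (μ := μ) {ω | sval A j - t ≤ sval (A + E ω) j}
      {ω | sval A j - t ≤ sval (A + E ω) j}ᶜ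
    rw [Set.union_compl_self, measure_univ] at h1
    exact h1
  calc ENNReal.ofReal (1 - 2 * C₁ * 9 ^ j * Real.exp (-c₁ * t ^ γ / 4 ^ γ))
      = 1 - ENNReal.ofReal (2 * C₁ * 9 ^ j * Real.exp (-c₁ * t ^ γ / 4 ^ γ)) := by
        rw [ENNReal.ofReal_sub _ hΔnonneg, ENNReal.ofReal_one]
    _ ≤ 1 - μ ({ω | sval A j - t ≤ sval (A + E ω) j}ᶜ) := tsub_le_tsub_left hbad2 1
    _ ≤ μ {ω | sval A j - t ≤ sval (A + E ω) j} := by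
        rw [tsub_le_iff_right]
        exact le_trans huniv (by rw [add_comm])
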